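/- arXiv:2010.08049 — 6 statements merged into one kernel-verified Lean document; each statement's English description precedes it below -/
import Mathlib

section
/- If A and B are subgroups of the additive group of real numbers and h : A → B is a group homomorphism that is strictly order preserving (with respect to the order inherited from ℝ), then there exists a positive real number λ such that h(a) = λ·a for every a ∈ A. -/
/-- Hion's Lemma: every strictly order preserving group homomorphism between
additive subgroups of `ℝ` is multiplication by a positive scalar. -/
theorem stmt_0 (A B : AddSubgroup ℝ) (h : A → B)
    (hadd : ∀ a b : A, h (a + b) = h a + h b)
    (hmono : ∀ a b : A, (a : ℝ) < (b : ℝ) → (h a : ℝ) < (h b : ℝ)) :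
    ∃ l : ℝ, 0 < l ∧ ∀ a : A, (h a : ℝ) = l * (a : ℝ) := by
  set H : A → ℝ := fun a => (h a : ℝ) with hH
  have Hadd : ∀ a b : A, H (a + b) = H a + H b := by
    intro a b
    have := congrArg (fun x : B => (x : ℝ)) (hadd a b)
    simpa [hH] using this
  have Hzero : H 0 = 0 := by
    have := Hadd 0 0
    simp only [add_zero] at this
    linarith
  have Hneg : ∀ a : A, H (-a) = - H a := by
    intro a
    have := Hadd a (-a)
    simp only [add_neg_cancel, Hzero] at this
    linarith
  have Hsmul : ∀ (n : ℕ) (a : A), H (n • a) = n * H a := by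
    intro n a
    induction n with
    | zero => simpa using Hzero
    | succ k ih =>
      have e : (k + 1 : ℕ) • a = k • a + a := by rw [add_smul, one_smul]
      rw [e, Hadd, ih]; push_cast; ring
  have Hmono : ∀ a b : A, (a : ℝ) < (b : ℝ) → H a < H b := hmono
  have Hpos : ∀ a : A, 0 < (a : ℝ) → 0 < H a := by
    intro a ha
    have : H 0 < H a := Hmono 0 a (by simpa using ha)
    linarith
  -- key: ratios equal for positive elements
  have key : ∀ a b : A, 0 < (a : ℝ) → 0 < (b : ℝ) → ¬ (H a / (a : ℝ) < H b / (b : ℝ)) := by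
    intro a b ha hb hlt
    have hHa := Hpos a ha
    have hHb := Hpos b hb
    have h1 : H a * (b : ℝ) < H b * (a : ℝ) := by
      rw [div_lt_div_iff₀ ha hb] at hlt; linarith
    have h2 : H a / H b < (a : ℝ) / (b : ℝ) := by
      rw [div_lt_div_iff₀ hHb hb]; linarith
    obtain ⟨q, hq1, hq2⟩ := exists_rat_btwn h2
    have hq0 : (0 : ℝ) < q := lt_trans (div_pos hHa hHb) hq1
    have hqpos : 0 < q := by exact_mod_cast hq0
    set m : ℕ := q.num.toNat with hm
    set n : ℕ := q.den with hn
    have hmq : (m : ℝ) = q.num := by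
      rw [hm]; exact_mod_cast Int.toNat_of_nonneg (le_of_lt (Rat.num_pos.mpr hqpos))
    have hnpos : 0 < (n : ℝ) := by exact_mod_cast q.den_pos
    have hqval : (q : ℝ) = (m : ℝ) / (n : ℝ) := by
      rw [hmq, hn, Rat.cast_def]
    -- m • b < n • a  (as reals)
    have hba : (m : ℝ) * (b : ℝ) < (n : ℝ) * (a : ℝ) := by
      have := hq2
      rw [hqval, div_lt_div_iff₀ hnpos hb] at this
      linarith
    have hcoe : ((m • b : A) : ℝ) < ((n • a : A) : ℝ) := by
      push_cast; simpa [mul_comm] using hba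
    have := Hmono _ _ hcoe
    rw [Hsmul, Hsmul] at this
    have hab : (n : ℝ) * H a < (m : ℝ) * H b := by
      have := hq1
      rw [hqval, div_lt_div_iff₀ hHb hnpos] at this
      linarith
    linarith
  by_cases htriv : ∀ a : A, (a : ℝ) = 0
  · refine ⟨1, one_pos, fun a => ?_⟩
    have ha : a = 0 := Subtype.ext (htriv a)
    rw [ha]
    simp only [ZeroMemClass.coe_zero, mul_zero]
    exact Hzero
  · push_neg at htriv
    obtain ⟨a₀, ha₀⟩ := htriv
    obtain ⟨c, hc⟩ : ∃ c : A, 0 < (c : ℝ) := by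
      rcases lt_or_gt_of_ne ha₀ with hlt | hgt
      · exact ⟨-a₀, by simpa using neg_pos.mpr hlt⟩
      · exact ⟨a₀, hgt⟩
    refine ⟨H c / (c : ℝ), div_pos (Hpos c hc) hc, ?_⟩
    have ratio : ∀ a : A, 0 < (a : ℝ) → H a = H c / (c : ℝ) * (a : ℝ) := by
      intro a ha
      have e1 : H a / (a : ℝ) = H c / (c : ℝ) :=
        le_antisymm (not_lt.mp (key c a hc ha)) (not_lt.mp (key a c ha hc))
      rw [div_eq_div_iff (ne_of_gt ha) (ne_of_gt hc)] at e1
      rw [div_mul_eq_mul_div, eq_div_iff (ne_of_gt hc)]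
      linarith
    intro a
    rcases lt_trichotomy ((a : ℝ)) 0 with hlt | heq | hgt
    · have hpos : 0 < ((-a : A) : ℝ) := by simpa using neg_pos.mpr hlt
      have := ratio (-a) hpos
      rw [Hneg] at this
      have hco : ((-a : A) : ℝ) = -(a : ℝ) := by push_cast; ring
      rw [hco] at this
      show H a = H c / (c : ℝ) * (a : ℝ)
      have hc0 : (c : ℝ) ≠ 0 := ne_of_gt hc
      field_simp at this ⊢
      linarith
    · have ha : a = 0 := Subtype.ext heq
      rw [ha]
      simp only [ZeroMemClass.coe_zero, mul_zero]
      exact Hzero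
    · exact ratio a hgt
end

section
/- Let A and B be subfields of ℝ. Then A ⊆ B if and only if there exists a strictly order preserving additive group homomorphism h : A → B. In particular, A and B are order isomorphic as ordered additive groups if and only if A = B. -/
lemma key_sub (A B : Subfield ℝ) (h : A → B)
    (hadd : ∀ a b : A, h (a + b) = h a + h b)
    (hmono : ∀ a b : A, (a : ℝ) < (b : ℝ) → (h a : ℝ) < (h b : ℝ)) :
    (A : Set ℝ) ⊆ (B : Set ℝ) := by
  -- g : A →+ ℝ
  set g : A →+ ℝ := AddMonoidHom.mk' (fun a => (h a : ℝ))
    (fun a b => by show (h (a+b):ℝ) = (h a:ℝ) + (h b:ℝ); rw [hadd]; push_cast; ring) with hg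
  have hgq : ∀ q : ℚ, g (q • (1 : A)) = q • g 1 := fun q => map_rat_smul g q 1
  have h0 : (h 0 : ℝ) = 0 := map_zero g
  have hlpos : 0 < g 1 := by
    have h01 := hmono 0 1 (by norm_num)
    rw [h0] at h01
    exact h01
  set l := g 1 with hl
  have hlin : ∀ a : A, g a = l * (a : ℝ) := by
    intro a
    by_contra hne
    rcases lt_or_gt_of_ne hne with hlt | hgt
    · -- g a < l * a, so g a / l < a
      have h1 : g a / l < (a : ℝ) := by
        rw [div_lt_iff₀ hlpos]; linarith [mul_comm l (a : ℝ)]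
      obtain ⟨q, hq1, hq2⟩ := exists_rat_btwn h1
      have hqa : ((q : ℝ)) < (a : ℝ) := hq2
      have hqA : ((q • (1:A) : A) : ℝ) = (q : ℝ) := by rw [Rat.smul_def, mul_one]; push_cast; ring
      have := hmono (q • (1:A)) a (by rw [hqA]; exact hqa)
      have hgq' : g (q • (1:A)) = q * l := by rw [hgq, Rat.smul_def]
      have : (q : ℝ) * l < g a := by
        have h' : (h (q • (1:A)) : ℝ) = (q:ℝ) * l := hgq'
        rw [← h']
        simpa [hg] using this
      have : g a < (q : ℝ) * l := by
        have := hq1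
        rw [div_lt_iff₀ hlpos] at this
        linarith
      linarith
    · have h1 : (a : ℝ) < g a / l := by
        rw [lt_div_iff₀ hlpos]; linarith [mul_comm l (a : ℝ)]
      obtain ⟨q, hq1, hq2⟩ := exists_rat_btwn h1
      have hqA : ((q • (1:A) : A) : ℝ) = (q : ℝ) := by rw [Rat.smul_def, mul_one]; push_cast; ring
      have hm := hmono a (q • (1:A)) (by rw [hqA]; exact hq1)
      have hgq' : g (q • (1:A)) = q * l := by rw [hgq, Rat.smul_def]
      have hga_lt : g a < (q : ℝ) * l := by
        rw [← hgq']; simpa [hg] using hm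
      have : (q : ℝ) * l < g a := by
        rw [lt_div_iff₀ hlpos] at hq2; linarith
      linarith
  intro x hx
  have hx' : x = g ⟨x, hx⟩ / l := by
    rw [hlin ⟨x, hx⟩]; field_simp
  rw [hx']
  exact B.div_mem (h ⟨x, hx⟩).2 (h 1).2
/-- For subfields `A`, `B` of `ℝ`: `A ⊆ B` iff there is a strictly order
preserving additive homomorphism `A → B`; and `A`, `B` are order isomorphic
as ordered additive groups iff `A = B`. -/
theorem stmt_3 (A B : Subfield ℝ) :
    ((A : Set ℝ) ⊆ (B : Set ℝ) ↔
      ∃ h : A → B, (∀ a b : A, h (a + b) = h a + h b) ∧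
        ∀ a b : A, (a : ℝ) < (b : ℝ) → (h a : ℝ) < (h b : ℝ)) ∧
    ((∃ f : A ≃+ B, ∀ x y : A, (x : ℝ) < (y : ℝ) ↔ (f x : ℝ) < (f y : ℝ)) ↔ A = B) := by
  constructor
  · constructor
    · intro hAB
      refine ⟨fun a => ⟨(a : ℝ), hAB a.2⟩, fun a b => rfl, fun a b hab => hab⟩
    · rintro ⟨h, hadd, hmono⟩
      exact key_sub A B h hadd hmono
  · constructor
    · rintro ⟨f, hf⟩
      apply le_antisymm
      · exact key_sub A B f (map_add f) (fun a b h => (hf a b).mp h)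
      · refine key_sub B A f.symm (map_add f.symm) (fun a b h => ?_)
        have := hf (f.symm a) (f.symm b)
        simp only [f.apply_symm_apply] at this
        exact this.mpr h
    · rintro rfl
      exact ⟨AddEquiv.refl A, fun x y => Iff.rfl⟩
end

section
/- For a nontrivial subgroup G of the additive reals and a nonzero real r, define G/r = { g/r : g ∈ G }, and let A_G = { G/r : r ∈ G, r ≠ 0 }. Then for nontrivial subgroups G, H ≤ ℝ: G and H are order isomorphic (as ordered additive groups) if and only if A_G = A_H. -/
/-- `G/r = { g/r : g ∈ G }`. -/
def divSet (G : AddSubgroup ℝ) (r : ℝ) : Set ℝ := {x | ∃ g ∈ G, x = g / r}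

/-- The invariant `A_G = { G/r : r ∈ G, r ≠ 0 }`. -/
def AInv (G : AddSubgroup ℝ) : Set (Set ℝ) := {S | ∃ r ∈ G, r ≠ 0 ∧ S = divSet G r}

lemma exists_pos_mem (G : AddSubgroup ℝ) (hG : G ≠ ⊥) : ∃ g ∈ G, 0 < g := by
  rw [AddSubgroup.ne_bot_iff_exists_ne_zero] at hG
  obtain ⟨⟨g, hg⟩, h⟩ := hG
  have h : g ≠ 0 := by simpa using h
  rcases h.lt_or_gt with h' | h'
  · exact ⟨-g, G.neg_mem hg, by linarith⟩
  · exact ⟨g, hg, h'⟩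

lemma divSet_neg (G : AddSubgroup ℝ) (r : ℝ) : divSet G (-r) = divSet G r := by
  ext x
  constructor
  · rintro ⟨g, hg, rfl⟩
    exact ⟨-g, G.neg_mem hg, by ring⟩
  · rintro ⟨g, hg, rfl⟩
    exact ⟨-g, G.neg_mem hg, by ring⟩

/-- Hion's lemma: a strictly order preserving additive isomorphism between
subgroups of `ℝ` is multiplication by a positive constant (relative to any
positive base point `g0`). -/
lemma hion (G H : AddSubgroup ℝ) (f : G ≃+ H)
    (hf : ∀ x y : G, (x : ℝ) < (y : ℝ) ↔ (f x : ℝ) < (f y : ℝ))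
    (g0 : G) (hg0 : 0 < (g0 : ℝ)) (g : G) :
    (f g : ℝ) * (g0 : ℝ) = (f g0 : ℝ) * (g : ℝ) := by
  set a : ℝ := (g : ℝ)
  set b : ℝ := (g0 : ℝ)
  set A : ℝ := (f g : ℝ)
  set B : ℝ := (f g0 : ℝ)
  have hB : 0 < B := by
    have h0 : ((0 : G) : ℝ) < (g0 : ℝ) := by simpa using hg0
    have := (hf 0 g0).mp h0
    simpa using this
  have e0 : ∀ (m : ℤ) (x : G), ((m • x : G) : ℝ) = (m : ℝ) * (x : ℝ) := by
    intro m x; push_cast; rw [zsmul_eq_mul]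
  have e1 : ∀ (m : ℤ) (x : G), ((f (m • x) : H) : ℝ) = (m : ℝ) * ((f x : H) : ℝ) := by
    intro m x; rw [map_zsmul]; push_cast; rw [zsmul_eq_mul]
  have key : ∀ m n : ℤ, (m : ℝ) * b < (n : ℝ) * a → (m : ℝ) * B < (n : ℝ) * A := by
    intro m n h
    have h1 : ((m • g0 : G) : ℝ) < ((n • g : G) : ℝ) := by rw [e0, e0]; exact h
    have h2 := (hf (m • g0) (n • g)).mp h1
    rw [e1, e1] at h2
    exact h2
  have key2 : ∀ m n : ℤ, (n : ℝ) * a < (m : ℝ) * b → (n : ℝ) * A < (m : ℝ) * B := by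
    intro m n h
    have h1 : ((n • g : G) : ℝ) < ((m • g0 : G) : ℝ) := by rw [e0, e0]; exact h
    have h2 := (hf (n • g) (m • g0)).mp h1
    rw [e1, e1] at h2
    exact h2
  rcases lt_trichotomy (A * b) (B * a) with h | h | h
  · exfalso
    have hx : A / B < a / b := (div_lt_div_iff₀ hB hg0).mpr (by linarith)
    obtain ⟨q, hq1, hq2⟩ := exists_rat_btwn hx
    have hqd : (0 : ℝ) < (q.den : ℝ) := by positivity
    have hqe : (q : ℝ) = (q.num : ℝ) / (q.den : ℝ) := by rw [Rat.cast_def]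
    have h1 : (q.num : ℝ) * b < (q.den : ℝ) * a := by
      have : (q : ℝ) * b < a := (lt_div_iff₀ hg0).mp hq2
      rw [hqe, div_mul_eq_mul_div, div_lt_iff₀ hqd] at this
      linarith
    have h2 : (q.den : ℝ) * A < (q.num : ℝ) * B := by
      have : A < (q : ℝ) * B := (div_lt_iff₀ hB).mp hq1
      rw [hqe, div_mul_eq_mul_div, lt_div_iff₀ hqd] at this
      linarith
    have := key q.num (q.den : ℤ) (by push_cast; linarith)
    push_cast at this
    linarith
  · exact h
  · exfalso
    have hx : a / b < A / B := (div_lt_div_iff₀ hg0 hB).mpr (by linarith)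
    obtain ⟨q, hq1, hq2⟩ := exists_rat_btwn hx
    have hqd : (0 : ℝ) < (q.den : ℝ) := by positivity
    have hqe : (q : ℝ) = (q.num : ℝ) / (q.den : ℝ) := by rw [Rat.cast_def]
    have h1 : (q.den : ℝ) * a < (q.num : ℝ) * b := by
      have : a < (q : ℝ) * b := (div_lt_iff₀ hg0).mp hq1
      rw [hqe, div_mul_eq_mul_div, lt_div_iff₀ hqd] at this
      linarith
    have h2 : (q.num : ℝ) * B < (q.den : ℝ) * A := by
      have : (q : ℝ) * B < A := (lt_div_iff₀ hB).mp hq2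
      rw [hqe, div_mul_eq_mul_div, div_lt_iff₀ hqd] at this
      linarith
    have := key2 q.num (q.den : ℤ) (by push_cast; linarith)
    push_cast at this
    linarith

/-- Forward inclusion from an order isomorphism. -/
lemma ainv_subset (G H : AddSubgroup ℝ) (hG : G ≠ ⊥) (f : G ≃+ H)
    (hf : ∀ x y : G, (x : ℝ) < (y : ℝ) ↔ (f x : ℝ) < (f y : ℝ)) :
    AInv G ⊆ AInv H := by
  obtain ⟨g0, hg0mem, hg0pos⟩ := exists_pos_mem G hG
  set g0' : G := ⟨g0, hg0mem⟩
  have hg0' : 0 < (g0' : ℝ) := hg0pos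
  set c : ℝ := (f g0' : ℝ) / g0 with hc
  have hB : 0 < (f g0' : ℝ) := by
    have h0 : ((0 : G) : ℝ) < (g0' : ℝ) := by simpa using hg0pos
    have := (hf 0 g0').mp h0
    simpa using this
  have hcpos : 0 < c := div_pos hB hg0pos
  have hlin : ∀ g : G, (f g : ℝ) = c * (g : ℝ) := by
    intro g
    have := hion G H f hf g0' hg0' g
    have h2 : ((g0' : G) : ℝ) = g0 := rfl
    rw [h2] at this
    rw [hc, div_mul_eq_mul_div, eq_div_iff (ne_of_gt hg0pos)]
    linarith [this]
  rintro S ⟨r, hr, hrne, rfl⟩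
  refine ⟨c * r, ?_, by positivity, ?_⟩
  · have : (f ⟨r, hr⟩ : ℝ) = c * r := hlin ⟨r, hr⟩
    rw [← this]; exact (f ⟨r, hr⟩).2
  · ext x
    constructor
    · rintro ⟨g, hg, rfl⟩
      refine ⟨c * g, ?_, ?_⟩
      · have : (f ⟨g, hg⟩ : ℝ) = c * g := hlin ⟨g, hg⟩
        rw [← this]; exact (f ⟨g, hg⟩).2
      · rw [mul_div_mul_left _ _ (ne_of_gt hcpos)]
    · rintro ⟨h, hh, rfl⟩
      obtain ⟨g, hgG, hgh⟩ : ∃ g, ∃ hg : g ∈ G, (⟨h, hh⟩ : H) = f ⟨g, hg⟩ :=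
        ⟨(f.symm ⟨h, hh⟩ : ℝ), (f.symm ⟨h, hh⟩).2, by simp⟩
      have hh' : h = c * g := by
        have := hlin ⟨g, hgG⟩
        rw [← hgh] at this
        simpa using this
      refine ⟨g, hgG, ?_⟩
      rw [hh', mul_div_mul_left _ _ (ne_of_gt hcpos)]

/-- Nontrivial subgroups `G, H ≤ ℝ` are order isomorphic iff `A_G = A_H`. -/
theorem stmt_4 (G H : AddSubgroup ℝ) (hG : G ≠ ⊥) (hH : H ≠ ⊥) :
    (∃ f : G ≃+ H, ∀ x y : G, (x : ℝ) < (y : ℝ) ↔ (f x : ℝ) < (f y : ℝ)) ↔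
      AInv G = AInv H := by
  constructor
  · rintro ⟨f, hf⟩
    apply Set.Subset.antisymm (ainv_subset G H hG f hf)
    have hf' : ∀ x y : H, (x : ℝ) < (y : ℝ) ↔ (f.symm x : ℝ) < (f.symm y : ℝ) := by
      intro x y
      rw [hf (f.symm x) (f.symm y)]
      simp
    exact ainv_subset H G hH f.symm hf'
  · intro hAB
    obtain ⟨r, hrmem, hrpos⟩ := exists_pos_mem G hG
    have hS : divSet G r ∈ AInv H := by
      rw [← hAB]
      exact ⟨r, hrmem, ne_of_gt hrpos, rfl⟩
    obtain ⟨s, hsmem, hsne, hSeq⟩ := hS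
    -- WLOG `s > 0` by replacing `s` with `-s`
    obtain ⟨s, hsmem, hspos, hSeq⟩ :
        ∃ s', s' ∈ H ∧ 0 < s' ∧ divSet G r = divSet H s' := by
      rcases hsne.lt_or_gt with h | h
      · exact ⟨-s, H.neg_mem hsmem, by linarith, by rw [hSeq, divSet_neg]⟩
      · exact ⟨s, hsmem, h, hSeq⟩
    set c : ℝ := s / r with hc
    have hcpos : 0 < c := div_pos hspos hrpos
    have hto : ∀ g : G, (g : ℝ) * c ∈ H := by
      intro g
      have : (g : ℝ) / r ∈ divSet G r := ⟨g, g.2, rfl⟩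
      rw [hSeq] at this
      obtain ⟨h, hh, hhe⟩ := this
      have : (g : ℝ) * c = h := by
        rw [hc]
        field_simp at hhe ⊢
        linarith [hhe]
      rw [this]; exact hh
    have hinv : ∀ h : H, (h : ℝ) / c ∈ G := by
      intro h
      have : (h : ℝ) / s ∈ divSet H s := ⟨h, h.2, rfl⟩
      rw [← hSeq] at this
      obtain ⟨g, hg, hge⟩ := this
      have : (h : ℝ) / c = g := by
        rw [hc]
        field_simp at hge ⊢
        linarith [hge]
      rw [this]; exact hg
    refine ⟨⟨⟨fun g => ⟨(g : ℝ) * c, hto g⟩, fun h => ⟨(h : ℝ) / c, hinv h⟩,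
      ?_, ?_⟩, ?_⟩, ?_⟩
    · intro g
      ext
      simp only
      field_simp
    · intro h
      ext
      simp only
      field_simp
    · intro x y
      ext
      push_cast
      ring
    · intro x y
      constructor
      · intro hxy
        exact mul_lt_mul_of_pos_right hxy hcpos
      · intro hxy
        exact lt_of_mul_lt_mul_right (by simpa using hxy) (le_of_lt hcpos)
end

section
/- Let G and H be nontrivial subgroups of ℝ that are bi-embeddable as ordered groups (each order-embeds into the other) but not order isomorphic. Then for every X ∈ A_G there exists X' ∈ A_G with X strictly contained in X' (X ⊊ X'). -/
/-- Any strictly monotone additive map from a subgroup of `ℝ` (with a positive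
element) to `ℝ` is multiplication by a positive constant. -/
lemma linear_of_strictMono_aux (G : AddSubgroup ℝ) (θ : G → ℝ)
    (hadd : ∀ x y : G, θ (x + y) = θ x + θ y)
    (hmono : ∀ x y : G, (x : ℝ) < (y : ℝ) → θ x < θ y)
    (a : G) (ha : (0 : ℝ) < (a : ℝ)) :
    ∃ c : ℝ, 0 < c ∧ ∀ g : G, θ g = c * (g : ℝ) := by
  set f : G →+ ℝ := AddMonoidHom.mk' θ hadd with hf
  have hθ0 : θ 0 = 0 := f.map_zero
  have hθa : 0 < θ a := by
    have := hmono 0 a (by simpa using ha)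
    simpa [hθ0] using this
  refine ⟨θ a / (a : ℝ), div_pos hθa ha, ?_⟩
  intro g
  have hz : ∀ (n : ℤ) (x : G), θ (n • x) = n * θ x := by
    intro n x
    have := map_zsmul f n x
    simpa [hf, zsmul_eq_mul] using this
  have key : θ g * (a : ℝ) = θ a * (g : ℝ) := by
    by_contra hne
    rcases lt_or_gt_of_ne hne with h | h
    · have h1 : θ g / θ a < (g : ℝ) / (a : ℝ) := by
        rw [div_lt_div_iff₀ hθa ha]; linarith
      obtain ⟨q, hq1, hq2⟩ := exists_rat_btwn h1
      have hden : (0 : ℝ) < (q.den : ℝ) := by positivity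
      have hcast : (q : ℝ) = (q.num : ℝ) / (q.den : ℝ) := by
        rw [Rat.cast_def]
      have h2 : (q.num : ℝ) * (a : ℝ) < (q.den : ℝ) * (g : ℝ) := by
        rw [hcast] at hq2
        rw [div_lt_div_iff₀ hden ha] at hq2
        linarith
      have h3 := hmono (q.num • a) ((q.den : ℤ) • g) (by push_cast [zsmul_eq_mul]; linarith)
      rw [hz, hz] at h3
      have h4 : (q : ℝ) < θ g / θ a := by
        rw [hcast, div_lt_div_iff₀ hden hθa]
        push_cast at h3 ⊢
        linarith
      linarith
    · have h1 : (g : ℝ) / (a : ℝ) < θ g / θ a := by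
        rw [div_lt_div_iff₀ ha hθa]; linarith
      obtain ⟨q, hq1, hq2⟩ := exists_rat_btwn h1
      have hden : (0 : ℝ) < (q.den : ℝ) := by positivity
      have hcast : (q : ℝ) = (q.num : ℝ) / (q.den : ℝ) := by
        rw [Rat.cast_def]
      have h2 : (q.den : ℝ) * (g : ℝ) < (q.num : ℝ) * (a : ℝ) := by
        rw [hcast] at hq1
        rw [div_lt_div_iff₀ ha hden] at hq1
        linarith
      have h3 := hmono ((q.den : ℤ) • g) (q.num • a) (by push_cast [zsmul_eq_mul]; linarith)
      rw [hz, hz] at h3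
      have h4 : θ g / θ a < (q : ℝ) := by
        rw [hcast, div_lt_div_iff₀ hθa hden]
        push_cast at h3 ⊢
        linarith
      linarith
  field_simp
  linarith

/-- If nontrivial `G, H ≤ ℝ` are bi-embeddable as ordered groups but not order
isomorphic, then every member of `A_G` is strictly contained in another member of `A_G`. -/
theorem stmt_6 (G H : AddSubgroup ℝ) (hG : G ≠ ⊥) (hH : H ≠ ⊥)
    (hGH : ∃ φ : G → H, (∀ a b : G, φ (a + b) = φ a + φ b) ∧
      ∀ a b : G, (a : ℝ) < (b : ℝ) → (φ a : ℝ) < (φ b : ℝ))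
    (hHG : ∃ ψ : H → G, (∀ a b : H, ψ (a + b) = ψ a + ψ b) ∧
      ∀ a b : H, (a : ℝ) < (b : ℝ) → (ψ a : ℝ) < (ψ b : ℝ))
    (hniso : ¬ ∃ f : G ≃+ H, ∀ x y : G, (x : ℝ) < (y : ℝ) ↔ (f x : ℝ) < (f y : ℝ)) :
    ∀ X ∈ AInv G, ∃ X' ∈ AInv G, X ⊂ X' := by
  obtain ⟨φ, φadd, φmono⟩ := hGH
  obtain ⟨ψ, ψadd, ψmono⟩ := hHG
  -- a positive element of G
  obtain ⟨a, ha0⟩ := (AddSubgroup.ne_bot_iff_exists_ne_zero).mp hG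
  have ha0' : (a : ℝ) ≠ 0 := fun h => ha0 (Subtype.ext h)
  obtain ⟨aP, haP⟩ : ∃ aP : G, (0 : ℝ) < (aP : ℝ) := by
    rcases lt_or_gt_of_ne ha0' with h | h
    · exact ⟨-a, by simpa using neg_pos.mpr h⟩
    · exact ⟨a, h⟩
  -- φ sends positives to positives
  have φ0 : φ 0 = 0 := by
    have := φadd 0 0; simpa using this.symm
  have hbP : (0 : ℝ) < ((φ aP : H) : ℝ) := by
    have := φmono 0 aP (by simpa using haP)
    simpa [φ0] using this
  obtain ⟨c, hc, hφ⟩ := linear_of_strictMono_aux G (fun g => ((φ g : H) : ℝ))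
    (fun x y => by exact_mod_cast congrArg (Subtype.val) (φadd x y))
    φmono aP haP
  obtain ⟨d, hd, hψ⟩ := linear_of_strictMono_aux H (fun h => ((ψ h : G) : ℝ))
    (fun x y => by exact_mod_cast congrArg (Subtype.val) (ψadd x y))
    ψmono (φ aP) hbP
  set e : ℝ := d * c with he_def
  have he : 0 < e := mul_pos hd hc
  have heG : ∀ g : G, e * (g : ℝ) ∈ G := by
    intro g
    have h1 : ((ψ (φ g) : G) : ℝ) = e * (g : ℝ) := by
      rw [hψ, hφ]; ring
    rw [← h1]; exact (ψ (φ g)).2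
  by_cases hsurj : ∀ g : G, ∃ g' : G, (g : ℝ) = e * (g' : ℝ)
  · exfalso
    apply hniso
    have hmemH : ∀ g : G, (g : ℝ) / d ∈ H := by
      intro g
      obtain ⟨g', hg'⟩ := hsurj g
      have h1 : (g : ℝ) / d = c * (g' : ℝ) := by
        rw [hg', he_def]; field_simp
      rw [h1, ← hφ g']; exact (φ g').2
    have hmemG : ∀ h : H, d * (h : ℝ) ∈ G := by
      intro h
      have h1 : ((ψ h : G) : ℝ) = d * (h : ℝ) := hψ h
      rw [← h1]; exact (ψ h).2
    refine ⟨{ toFun := fun g => ⟨(g : ℝ) / d, hmemH g⟩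
              invFun := fun h => ⟨d * (h : ℝ), hmemG h⟩
              left_inv := fun g => by ext; field_simp
              right_inv := fun h => by ext; field_simp
              map_add' := fun x y => by ext; push_cast; ring }, ?_⟩
    intro x y
    simp only [AddEquiv.coe_mk, Equiv.coe_fn_mk]
    constructor
    · intro h; exact div_lt_div_of_pos_right h hd
    · intro h
      exact (div_lt_div_iff_of_pos_right hd).mp h
  · push_neg at hsurj
    obtain ⟨g₀, hg₀⟩ := hsurj
    rintro X ⟨r, hrG, hr0, rfl⟩
    have hs : e * r ∈ G := heG ⟨r, hrG⟩
    refine ⟨divSet G (e * r), ⟨e * r, hs, mul_ne_zero (ne_of_gt he) hr0, rfl⟩, ?_⟩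
    rw [Set.ssubset_def]
    constructor
    · rintro x ⟨g, hgG, rfl⟩
      exact ⟨e * g, heG ⟨g, hgG⟩, by field_simp⟩
    · intro hcon
      have hmem : (g₀ : ℝ) / (e * r) ∈ divSet G (e * r) := ⟨g₀, g₀.2, rfl⟩
      obtain ⟨g, hgG, hg⟩ := hcon hmem
      apply hg₀ ⟨g, hgG⟩
      have h1 : (g₀ : ℝ) = (g / r) * (e * r) := by
        rw [← hg]; field_simp
      rw [h1]; field_simp
end

section
/- Let α, β be irrational reals. If the ordered additive groups span_ℚ{1, α} and span_ℚ{1, β} are order isomorphic, then α = (kβ + ℓ)/(mβ + n) for some rational numbers k, ℓ, m, n with mβ + n ≠ 0. Consequently, for fixed β there are only countably many irrational α with span_ℚ{1, α} order isomorphic to span_ℚ{1, β}. -/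
/-- The `ℚ`-linear span of `{1, α}` inside `ℝ`, as an additive subgroup of `ℝ`. -/
noncomputable def spanQ (α : ℝ) : AddSubgroup ℝ :=
  (Submodule.span ℚ ({1, α} : Set ℝ)).toAddSubgroup

lemma mem_spanQ_iff (α x : ℝ) : x ∈ spanQ α ↔ ∃ p q : ℚ, x = (p : ℝ) * α + q := by
  rw [spanQ, Submodule.mem_toAddSubgroup, Submodule.mem_span_pair]
  constructor
  · rintro ⟨a, b, rfl⟩
    exact ⟨b, a, by push_cast [Rat.smul_def]; ring⟩
  · rintro ⟨p, q, rfl⟩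
    exact ⟨q, p, by push_cast [Rat.smul_def]; ring⟩

lemma one_mem_spanQ (α : ℝ) : (1 : ℝ) ∈ spanQ α :=
  (mem_spanQ_iff α 1).2 ⟨0, 1, by norm_num⟩

lemma self_mem_spanQ (α : ℝ) : α ∈ spanQ α :=
  (mem_spanQ_iff α α).2 ⟨1, 0, by norm_num⟩

lemma main_lemma (β α : ℝ)
    (h : ∃ f : spanQ α ≃+ spanQ β,
        ∀ x y : spanQ α, (x : ℝ) < (y : ℝ) ↔ (f x : ℝ) < (f y : ℝ)) :
    ∃ k l m n : ℚ, (m : ℝ) * β + (n : ℝ) ≠ 0 ∧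
        α = ((k : ℝ) * β + (l : ℝ)) / ((m : ℝ) * β + (n : ℝ)) := by
  obtain ⟨f, hf⟩ := h
  set a1 : spanQ α := ⟨1, one_mem_spanQ α⟩ with ha1
  set aα : spanQ α := ⟨α, self_mem_spanQ α⟩ with haα
  set f1 : ℝ := (f a1 : ℝ) with hf1def
  set fα : ℝ := (f aα : ℝ) with hfαdef
  have hf1pos : 0 < f1 := by
    have h01 : ((0 : spanQ α) : ℝ) < (a1 : ℝ) := by norm_num [ha1]
    have := (hf 0 a1).1 h01
    simpa using this
  -- key integer statement
  have keyZ : ∀ p q : ℤ, (p : ℝ) < (q : ℝ) * α ↔ (p : ℝ) * f1 < (q : ℝ) * fα := by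
    intro p q
    have := hf (p • a1) (q • aα)
    simp only [map_zsmul, AddSubgroup.coe_zsmul, ha1, haα, zsmul_eq_mul] at this
    simpa [mul_comm] using this
  -- rational version
  have keyQ : ∀ r : ℚ, (r : ℝ) < α ↔ (r : ℝ) * f1 < fα := by
    intro r
    have hden : (0 : ℝ) < (r.den : ℝ) := by positivity
    have hr : (r : ℝ) = (r.num : ℝ) / (r.den : ℝ) := by
      rw [Rat.cast_def]
    constructor
    · intro hlt
      have h1 : (r.num : ℝ) < (r.den : ℝ) * α := by
        rw [hr, div_lt_iff₀ hden] at hlt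
        linarith [mul_comm α (r.den : ℝ)]
      have h2 := (keyZ r.num (r.den : ℤ)).1 (by exact_mod_cast h1)
      rw [hr, div_mul_eq_mul_div, div_lt_iff₀ hden]
      push_cast at h2 ⊢
      nlinarith
    · intro hlt
      have h2 : (r.num : ℝ) * f1 < (r.den : ℝ) * fα := by
        rw [hr, div_mul_eq_mul_div, div_lt_iff₀ hden] at hlt
        nlinarith
      have h1 := (keyZ r.num (r.den : ℤ)).2 (by exact_mod_cast h2)
      rw [hr, div_lt_iff₀ hden]
      push_cast at h1 ⊢
      nlinarith
  set γ : ℝ := fα / f1 with hγ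
  have hαγ : α = γ := by
    by_contra hne
    rcases lt_or_gt_of_ne hne with hlt | hgt
    · obtain ⟨r, hr1, hr2⟩ := exists_rat_btwn hlt
      have : (r : ℝ) * f1 < fα := (lt_div_iff₀ hf1pos).1 hr2
      have : (r : ℝ) < α := (keyQ r).2 this
      linarith
    · obtain ⟨r, hr1, hr2⟩ := exists_rat_btwn hgt
      have : (r : ℝ) * f1 < fα := ((keyQ r)).1 hr2
      have : (r : ℝ) < γ := (lt_div_iff₀ hf1pos).2 this
      linarith
  obtain ⟨m, n, hmn⟩ := (mem_spanQ_iff β f1).1 (f a1).2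
  obtain ⟨k, l, hkl⟩ := (mem_spanQ_iff β fα).1 (f aα).2
  refine ⟨k, l, m, n, ?_, ?_⟩
  · rw [← hmn]; exact ne_of_gt hf1pos
  · rw [← hmn, ← hkl, ← hγ, hαγ]

/-- If `span_ℚ{1, α}` and `span_ℚ{1, β}` are order isomorphic (α, β irrational) then
`α = (kβ + ℓ)/(mβ + n)` for some rationals; consequently for fixed `β` there are only
countably many such irrational `α`. -/
theorem stmt_11 (β : ℝ) (hβ : Irrational β) :
    (∀ α : ℝ, Irrational α →
      (∃ f : spanQ α ≃+ spanQ β,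
        ∀ x y : spanQ α, (x : ℝ) < (y : ℝ) ↔ (f x : ℝ) < (f y : ℝ)) →
      ∃ k l m n : ℚ, (m : ℝ) * β + (n : ℝ) ≠ 0 ∧
        α = ((k : ℝ) * β + (l : ℝ)) / ((m : ℝ) * β + (n : ℝ))) ∧
    Set.Countable {α : ℝ | Irrational α ∧
      ∃ f : spanQ α ≃+ spanQ β,
        ∀ x y : spanQ α, (x : ℝ) < (y : ℝ) ↔ (f x : ℝ) < (f y : ℝ)} := by
  constructor
  · intro α _ h
    exact main_lemma β α h
  · have hsub : {α : ℝ | Irrational α ∧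
        ∃ f : spanQ α ≃+ spanQ β,
          ∀ x y : spanQ α, (x : ℝ) < (y : ℝ) ↔ (f x : ℝ) < (f y : ℝ)} ⊆
        Set.range (fun t : ℚ × ℚ × ℚ × ℚ =>
          ((t.1 : ℝ) * β + (t.2.1 : ℝ)) / ((t.2.2.1 : ℝ) * β + (t.2.2.2 : ℝ))) := by
      rintro α ⟨_, hex⟩
      obtain ⟨k, l, m, n, _, heq⟩ := main_lemma β α hex
      exact ⟨(k, l, m, n), heq.symm⟩
    exact (Set.countable_range _).mono hsub
end

section
/- Let T ⊆ ℝ be a set of reals that is algebraically independent over ℚ, and let S, S' ⊆ T. If the subfields ℚ(S) and ℚ(S') generated by S and S' in ℝ are equal, then S = S'. Consequently, if S ≠ S' then the ordered additive groups ℚ(S) and ℚ(S') are not order isomorphic. -/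
open scoped Polynomial

lemma key_not_mem (T : Set ℝ) (hT : AlgebraicIndependent ℚ ((↑) : T → ℝ))
    {x : ℝ} (hxT : x ∈ T) {S' : Set ℝ} (hS' : S' ⊆ T) (hx : x ∉ S') :
    x ∉ Subfield.closure S' := by
  intro hmem
  -- S' is algebraically independent
  have h2 : AlgebraicIndependent ℚ ((↑) : S' → ℝ) := hT.mono hS'
  have hins : AlgebraicIndependent ℚ ((↑) : (Set.insert x S') → ℝ) :=
    hT.mono (Set.insert_subset_iff.mpr ⟨hxT, hS'⟩)
  have hopt : AlgebraicIndependent ℚ (fun o : Option S' => o.elim x (↑)) := by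
    classical
    refine (algebraicIndependent_equiv' (R := ℚ) (e := (Equiv.optionEquivSumPUnit ↥S').trans (Equiv.Set.insert hx).symm)
      (f := ((↑) : (Set.insert x S') → ℝ))
      (g := fun o : Option S' => o.elim x (↑)) ?_).mpr hins
    funext o
    cases o with
    | none => simp
    | some i => simp
  have htr : Transcendental (Algebra.adjoin ℚ (Set.range ((↑) : S' → ℝ))) x :=
    (h2.option_iff_transcendental x).mp hopt
  rw [Subtype.range_coe] at htr
  -- x ≠ 0
  have hx0 : x ≠ 0 := hT.ne_zero ⟨x, hxT⟩
  -- get p/q representation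
  obtain ⟨p, hp, q, hq, hpq⟩ := Subfield.mem_closure_iff.mp hmem
  have hq0 : q ≠ 0 := by
    rintro rfl
    rw [div_zero] at hpq
    exact hx0 hpq.symm
  have hsub : Subring.closure S' ≤ (Algebra.adjoin ℚ S').toSubring :=
    Subring.closure_le.mpr (fun z hz => Algebra.subset_adjoin hz)
  set A := Algebra.adjoin ℚ S'
  have hpA : p ∈ A := hsub hp
  have hqA : q ∈ A := hsub hq
  apply htr
  refine ⟨Polynomial.C (⟨q, hqA⟩ : A) * Polynomial.X - Polynomial.C (⟨p, hpA⟩ : A), ?_, ?_⟩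
  · intro h
    have := congrArg (Polynomial.coeff · 1) h
    simp [Polynomial.coeff_sub] at this
    exact hq0 (congrArg Subtype.val this)
  · have hpx : p = x * q := by field_simp at hpq; linarith [hpq]
    simp [Polynomial.aeval_def, Polynomial.eval₂_sub, Polynomial.eval₂_mul]
    show (⟨q, hqA⟩ : A).val * x - (⟨p, hpA⟩ : A).val = 0
    simp only []
    rw [hpx]; ring

lemma key_subset (T : Set ℝ) (hT : AlgebraicIndependent ℚ ((↑) : T → ℝ))
    {S S' : Set ℝ} (hS : S ⊆ T) (hS' : S' ⊆ T)
    (h : Subfield.closure S ≤ Subfield.closure S') : S ⊆ S' := fun x hxS =>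
  by_contra fun hx =>
    key_not_mem T hT (hS hxS) hS' hx (h (Subfield.subset_closure hxS))

lemma key_eq (T : Set ℝ) (hT : AlgebraicIndependent ℚ ((↑) : T → ℝ))
    {S S' : Set ℝ} (hS : S ⊆ T) (hS' : S' ⊆ T)
    (h : Subfield.closure S = Subfield.closure S') : S = S' :=
  Set.Subset.antisymm (key_subset T hT hS hS' h.le) (key_subset T hT hS' hS h.ge)

lemma key_ordiso {S S' : Set ℝ}
    (f : Subfield.closure S ≃+ Subfield.closure S')
    (hf : ∀ x y : Subfield.closure S, (x : ℝ) < (y : ℝ) ↔ (f x : ℝ) < (f y : ℝ)) :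
    Subfield.closure S = Subfield.closure S' := by
  set c : ℝ := ((f 1 : Subfield.closure S') : ℝ) with hc_def
  have hc : (0 : ℝ) < c := by
    have h01 : ((0 : Subfield.closure S) : ℝ) < ((1 : Subfield.closure S) : ℝ) := by norm_num
    have := (hf 0 1).mp h01
    rwa [map_zero, ZeroMemClass.coe_zero] at this
  have hc0 : c ≠ 0 := ne_of_gt hc
  have hrat : ∀ r : ℚ, (f (r : Subfield.closure S) : ℝ) = r * c := by
    intro r
    have h1 : (r : Subfield.closure S) = r • (1 : Subfield.closure S) := by rw [Rat.smul_one_eq_cast]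
    rw [h1, map_rat_smul f r 1]
    push_cast
    rw [Rat.smul_def]
  have hlin : ∀ z : Subfield.closure S, (f z : ℝ) = c * (z : ℝ) := by
    intro z
    apply le_antisymm
    · by_contra hcon
      push_neg at hcon
      have hz : (z : ℝ) < (f z : ℝ) / c := (lt_div_iff₀ hc).mpr (by linarith)
      obtain ⟨r, hr1, hr2⟩ := exists_rat_btwn hz
      have hzr : (z : ℝ) < ((r : Subfield.closure S) : ℝ) := by push_cast; exact hr1
      have h2 := (hf z (r : Subfield.closure S)).mp hzr
      rw [hrat r] at h2
      have h3 : (r : ℝ) * c < (f z : ℝ) := (lt_div_iff₀ hc).mp hr2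
      linarith
    · by_contra hcon
      push_neg at hcon
      have hz : (f z : ℝ) / c < (z : ℝ) := (div_lt_iff₀ hc).mpr (by linarith)
      obtain ⟨r, hr1, hr2⟩ := exists_rat_btwn hz
      have hzr : ((r : Subfield.closure S) : ℝ) < (z : ℝ) := by push_cast; exact hr2
      have h2 := (hf (r : Subfield.closure S) z).mp hzr
      rw [hrat r] at h2
      have h3 : (f z : ℝ) < (r : ℝ) * c := (div_lt_iff₀ hc).mp hr1
      linarith
  have himg : ∀ y : Subfield.closure S', ∃ z : Subfield.closure S, (y : ℝ) = c * (z : ℝ) := fun y =>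
    ⟨f.symm y, by rw [← hlin (f.symm y), f.apply_symm_apply]⟩
  have hcK' : c ∈ Subfield.closure S' := (f 1).2
  have hcK : c ∈ Subfield.closure S := by
    obtain ⟨z, hz⟩ := himg ⟨c * c, mul_mem hcK' hcK'⟩
    have : (z : ℝ) = c := by
      have : c * c = c * (z : ℝ) := hz
      exact (mul_left_cancel₀ hc0 this).symm
    rw [← this]; exact z.2
  apply le_antisymm
  · intro a ha
    have hmem : c⁻¹ * a ∈ Subfield.closure S := mul_mem (inv_mem hcK) ha
    have := hlin ⟨c⁻¹ * a, hmem⟩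
    have heq : (f ⟨c⁻¹ * a, hmem⟩ : ℝ) = a := by
      rw [this]; field_simp
    rw [← heq]
    exact (f ⟨c⁻¹ * a, hmem⟩).2
  · intro y hy
    obtain ⟨z, hz⟩ := himg ⟨y, hy⟩
    have : y = c * (z : ℝ) := hz
    rw [this]
    exact mul_mem hcK z.2

/-- If `T ⊆ ℝ` is algebraically independent over `ℚ` and `S, S' ⊆ T` generate the same
subfield of `ℝ`, then `S = S'`; consequently if `S ≠ S'` then the generated subfields
are not order isomorphic as ordered additive groups. -/
theorem stmt_13 (T : Set ℝ) (hT : AlgebraicIndependent ℚ ((↑) : T → ℝ))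
    (S S' : Set ℝ) (hS : S ⊆ T) (hS' : S' ⊆ T) :
    (Subfield.closure S = Subfield.closure S' → S = S') ∧
    (S ≠ S' → ¬ ∃ f : Subfield.closure S ≃+ Subfield.closure S',
      ∀ x y : Subfield.closure S, (x : ℝ) < (y : ℝ) ↔ (f x : ℝ) < (f y : ℝ)) := by
  refine ⟨key_eq T hT hS hS', ?_⟩
  rintro hne ⟨f, hf⟩
  exact hne (key_eq T hT hS hS' (key_ordiso f hf))
end
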